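/- Let H be a complex Hilbert space and let A ⊆ B(H) be a norm-closed (not necessarily unital, not necessarily self-adjoint) subalgebra. If e ∈ A is a contractive quasi-identity of A (‖e‖ ≤ 1 and a = e∘a + a∘e − e∘a∘e for all a ∈ A), then e is self-adjoint (e* = e, hence an orthogonal projection), and e is the unique contractive quasi-identity of A: any e' ∈ A with ‖e'‖ ≤ 1 and a = e'∘a + a∘e' − e'∘a∘e' for all a ∈ A satisfies e' = e. -/

import Mathlib

open scoped InnerProductSpace

/-- A contractive idempotent on a complex Hilbert space is self-adjoint. -/
lemma aux_sa {H : Type*} [NormedAddCommGroup H] [InnerProductSpace ℂ H] [CompleteSpace H]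
    (p : H →L[ℂ] H) (hp : p * p = p) (hn : ‖p‖ ≤ 1) :
    ContinuousLinearMap.adjoint p = p := by
  have happ : ∀ x : H, p (p x) = p x := fun x => congrFun (congrArg DFunLike.coe hp) x
  have key : ∀ u v : H, p u = u → p v = 0 → ⟪u, v⟫_ℂ = 0 := by
    intro u v hu hv
    by_cases hv0 : v = 0
    · simp [hv0]
    set β : ℂ := ⟪u, v⟫_ℂ with hβ
    set r : ℝ := ‖v‖ ^ 2 with hr
    have hvpos : (0:ℝ) < r := pow_pos (norm_pos_iff.mpr hv0) 2
    set t : ℂ := -(starRingEnd ℂ) β / (r : ℂ) with ht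
    have hle : ‖u‖ ≤ ‖u + t • v‖ := by
      have h1 : p (u + t • v) = u := by rw [map_add, map_smul, hu, hv, smul_zero, add_zero]
      calc ‖u‖ = ‖p (u + t • v)‖ := by rw [h1]
        _ ≤ ‖p‖ * ‖u + t • v‖ := p.le_opNorm _
        _ ≤ 1 * ‖u + t • v‖ := mul_le_mul_of_nonneg_right hn (norm_nonneg _)
        _ = ‖u + t • v‖ := one_mul _
    have hexp : ‖u + t • v‖ ^ 2 = ‖u‖ ^ 2 - ‖β‖ ^ 2 / r := by
      have h2 : ‖u + t • v‖ ^ 2 =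
          ‖u‖ ^ 2 + 2 * Complex.re ⟪u, t • v⟫_ℂ + ‖t • v‖ ^ 2 := by
        rw [@norm_add_sq ℂ]; simp only [RCLike.re_to_complex]
      have h3 : ⟪u, t • v⟫_ℂ = t * β := by rw [inner_smul_right]
      have h4 : (t * β).re = -(‖β‖ ^ 2) / r := by
        have h4' : t * β = ((-(‖β‖ ^ 2) / r : ℝ) : ℂ) := by
          rw [ht, div_mul_eq_mul_div, neg_mul, Complex.conj_mul']
          push_cast; ring
        rw [h4', Complex.ofReal_re]
      have h5 : ‖t • v‖ ^ 2 = ‖β‖ ^ 2 / r := by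
        have hnt : ‖t‖ = ‖β‖ / r := by
          rw [ht, norm_div, norm_neg, RCLike.norm_conj, Complex.norm_real,
            Real.norm_of_nonneg hvpos.le]
        rw [norm_smul, mul_pow, hnt, div_pow, ← hr]
        field_simp
      rw [h2, h3, h4, h5]
      ring
    have hsq : ‖u‖ ^ 2 ≤ ‖u + t • v‖ ^ 2 := pow_le_pow_left₀ (norm_nonneg _) hle 2
    rw [hexp] at hsq
    have hβ0 : ‖β‖ ^ 2 / r ≤ 0 := by linarith
    have habs : ‖β‖ = 0 := by
      by_contra hc
      have h7 : 0 < ‖β‖ := lt_of_le_of_ne (norm_nonneg β) (Ne.symm hc)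
      have h6 : 0 < ‖β‖ ^ 2 / r := div_pos (by positivity) hvpos
      linarith
    exact norm_eq_zero.mp habs
  have h2 : ∀ x y : H, ⟪p x, y⟫_ℂ = ⟪x, p y⟫_ℂ := by
    intro x y
    have e1 : ⟪p x, y - p y⟫_ℂ = 0 := key (p x) (y - p y) (happ x) (by simp [happ])
    have e2 : ⟪p y, x - p x⟫_ℂ = 0 := key (p y) (x - p x) (happ y) (by simp [happ])
    have e2' : ⟪x - p x, p y⟫_ℂ = 0 := by rw [← inner_conj_symm, e2, map_zero]
    have l1 : ⟪p x, y⟫_ℂ = ⟪p x, p y⟫_ℂ := by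
      have h := inner_sub_right (𝕜 := ℂ) (p x) y (p y)
      rw [e1] at h
      linear_combination -h
    have l2 : ⟪x, p y⟫_ℂ = ⟪p x, p y⟫_ℂ := by
      have h := inner_sub_left (𝕜 := ℂ) x (p x) (p y)
      rw [e2'] at h
      linear_combination -h
    rw [l1, l2]
  ext x
  apply ext_inner_right ℂ
  intro y
  rw [ContinuousLinearMap.adjoint_inner_left]
  exact (h2 x y).symm

/-- A contractive quasi-identity of a norm-closed subalgebra of `B(H)` is
self-adjoint (hence an orthogonal projection) and unique. -/
theorem stmt_6 {H : Type*} [NormedAddCommGroup H] [InnerProductSpace ℂ H] [CompleteSpace H]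
    (A : NonUnitalSubalgebra ℂ (H →L[ℂ] H)) (hA : IsClosed (A : Set (H →L[ℂ] H)))
    (e : H →L[ℂ] H) (heA : e ∈ A) (hnorm : ‖e‖ ≤ 1)
    (he : ∀ a ∈ A, a = e * a + a * e - e * a * e) :
    ContinuousLinearMap.adjoint e = e ∧
      ∀ e' ∈ A, ‖e'‖ ≤ 1 → (∀ a ∈ A, a = e' * a + a * e' - e' * a * e') → e' = e := by
  -- Step 2: e^(n+2) = (n+1)•e² − n•e
  have hidem : ∀ x : H →L[ℂ] H, x ∈ A → ‖x‖ ≤ 1 →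
      (∀ a ∈ A, a = x * a + a * x - x * a * x) → x * x = x := by
    intro x hxA hxn hx
    have hc : x * x * x = x * x + x * x - x := by
      have h := hx x hxA
      rw [eq_sub_iff_add_eq] at h
      rw [eq_sub_iff_add_eq, add_comm]
      exact h
    have hpow : ∀ n : ℕ, x ^ (n + 2) = ((n:ℂ) + 1) • (x * x) - (n:ℂ) • x := by
      intro n
      induction n with
      | zero => simp [pow_succ, pow_one]
      | succ n ih =>
        have : x ^ (n + 3) = x ^ (n + 2) * x := by rw [pow_succ]
        rw [this, ih, sub_mul, smul_mul_assoc, smul_mul_assoc, hc]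
        push_cast
        module
    have hbound : ∀ n : ℕ, ((n:ℝ) + 1) * ‖x * x - x‖ ≤ 2 := by
      intro n
      have h1 : x ^ (n + 2) - x = ((n:ℂ) + 1) • (x * x - x) := by
        rw [hpow n, smul_sub]
        module
      have h2 : ‖x ^ (n + 2)‖ ≤ 1 := by
        calc ‖x ^ (n + 2)‖ ≤ ‖x‖ ^ (n + 2) := norm_pow_le' x (by omega)
          _ ≤ 1 := pow_le_one₀ (norm_nonneg _) hxn
      have h3 : ‖x ^ (n + 2) - x‖ ≤ 2 := by
        calc ‖x ^ (n + 2) - x‖ ≤ ‖x ^ (n + 2)‖ + ‖x‖ := norm_sub_le _ _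
          _ ≤ 1 + 1 := add_le_add h2 hxn
          _ = 2 := by norm_num
      rw [h1, norm_smul] at h3
      have h4 : ‖(n:ℂ) + 1‖ = (n:ℝ) + 1 := by
        rw [show ((n:ℂ) + 1) = ((n + 1 : ℕ) : ℂ) by push_cast; ring]
        rw [Complex.norm_natCast]
        push_cast; ring
      rw [h4] at h3
      exact h3
    have : ‖x * x - x‖ = 0 := by
      by_contra hc0
      have hpos : 0 < ‖x * x - x‖ := lt_of_le_of_ne (norm_nonneg _) (Ne.symm hc0)
      obtain ⟨n, hn⟩ := exists_nat_gt (2 / ‖x * x - x‖)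
      have := hbound n
      have h5 : 2 / ‖x * x - x‖ < (n:ℝ) + 1 := by linarith
      have h6 : 2 < ((n:ℝ) + 1) * ‖x * x - x‖ := by
        rw [div_lt_iff₀ hpos] at h5
        linarith
      linarith
    exact sub_eq_zero.mp (norm_eq_zero.mp this)
  have hee : e * e = e := hidem e heA hnorm he
  have hsa : ContinuousLinearMap.adjoint e = e := aux_sa e hee hnorm
  refine ⟨hsa, ?_⟩
  intro e' he'A he'n he'
  have he'e' : e' * e' = e' := hidem e' he'A he'n he'
  have hsa' : ContinuousLinearMap.adjoint e' = e' := aux_sa e' he'e' he'n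
  -- kernels coincide
  have happ : ∀ x : H, e (e x) = e x := fun x => congrFun (congrArg DFunLike.coe hee) x
  have happ' : ∀ x : H, e' (e' x) = e' x := fun x => congrFun (congrArg DFunLike.coe he'e') x
  have hker : ∀ (p q : H →L[ℂ] H), ContinuousLinearMap.adjoint p = p →
      ContinuousLinearMap.adjoint q = q → (∀ x, q (q x) = q x) →
      (∀ a ∈ A, a = p * a + a * p - p * a * p) → q ∈ A →
      (∀ x, p x = 0 → q x = 0) := by
    intro p q hsp hsq hq hrel hqA x hx
    have h1 : q x = p (q x) := by
      have hh := hrel q hqA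
      have h2 : q x = (p * q + q * p - p * q * p) x := by rw [← hh]
      simpa [ContinuousLinearMap.sub_apply, ContinuousLinearMap.add_apply,
        ContinuousLinearMap.mul_apply, hx, map_zero] using h2
    have hz : (⟪q x, q x⟫_ℂ) = 0 := by
      have ha : ⟪q x, q x⟫_ℂ = ⟪x, q (q x)⟫_ℂ := by
        have h := ContinuousLinearMap.adjoint_inner_left q (q x) x
        rw [hsq] at h
        exact h
      have hb : ⟪x, p (q x)⟫_ℂ = ⟪p x, q x⟫_ℂ := by
        have h := ContinuousLinearMap.adjoint_inner_left p (q x) x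
        rw [hsp] at h
        exact h.symm
      rw [ha, hq x, h1, hb, hx, inner_zero_left]
    exact inner_self_eq_zero.mp hz
  have k1 : ∀ x, e x = 0 → e' x = 0 := hker e e' hsa hsa' happ' he he'A
  have k2 : ∀ x, e' x = 0 → e x = 0 := hker e' e hsa' hsa happ he' heA
  have m1 : e' * e = e' := by
    ext x
    have hx : e (x - e x) = 0 := by simp [map_sub, happ]
    have := k1 (x - e x) hx
    rw [map_sub] at this
    have h3 : e' (e x) = e' x := (sub_eq_zero.mp this).symm
    simpa [ContinuousLinearMap.mul_apply] using h3
  have m2 : e * e' = e := by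
    ext x
    have hx : e' (x - e' x) = 0 := by simp [map_sub, happ']
    have := k2 (x - e' x) hx
    rw [map_sub] at this
    have h3 : e (e' x) = e x := (sub_eq_zero.mp this).symm
    simpa [ContinuousLinearMap.mul_apply] using h3
  calc e' = ContinuousLinearMap.adjoint e' := hsa'.symm
    _ = ContinuousLinearMap.adjoint (e' * e) := by rw [m1]
    _ = ContinuousLinearMap.adjoint e * ContinuousLinearMap.adjoint e' := by
        rw [show e' * e = ContinuousLinearMap.comp e' e from rfl,
          ContinuousLinearMap.adjoint_comp]
        rfl
    _ = e * e' := by rw [hsa, hsa']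
    _ = e := m2
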